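/- Let G be a finite simple graph and c a finite set of edges of G. Let B be the set of vertices of G incident to an odd number of edges of c, and suppose B has cardinality 2M. Then there exist M pairwise edge-disjoint paths γ₁, …, γ_M in G (walks with no repeated vertices) such that every edge of every γ_m lies in c, every endpoint of every γ_m lies in B, and every vertex of B is an endpoint of exactly one of the paths γ₁, …, γ_M. -/

import Mathlib

open SimpleGraph Finset

lemma edge_cnt_of_not_mem_support {V : Type} [DecidableEq V] {G : SimpleGraph V} {x y : V}
    (p : G.Walk x y) (u : V) (hu : u ∉ p.support) :
    p.edges.countP (fun e => u ∈ e) = 0 := by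
  rw [List.countP_eq_zero]
  intro e he
  simp only [decide_eq_true_eq]
  revert he
  induction e using Sym2.ind with
  | _ a b =>
    intro he hue
    rcases Sym2.mem_iff.mp hue with rfl | rfl
    · exact hu (p.fst_mem_support_of_mem_edges he)
    · exact hu (p.snd_mem_support_of_mem_edges he)

lemma path_parity {V : Type} [DecidableEq V] {G : SimpleGraph V} {x y : V}
    (p : G.Walk x y) (hp : p.IsPath) (u : V) :
    Odd (p.edges.countP (fun e => u ∈ e)) ↔ ((u = x ∧ u ≠ y) ∨ (u = y ∧ u ≠ x)) := by
  induction p with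
  | nil =>
    simp
  | @cons x z y h q ih =>
    rw [SimpleGraph.Walk.cons_isPath_iff] at hp
    obtain ⟨hq, hxs⟩ := hp
    have ih := ih hq
    rw [SimpleGraph.Walk.edges_cons, List.countP_cons]
    by_cases hux : u = x
    · subst hux
      have h0 : q.edges.countP (fun e => u ∈ e) = 0 := edge_cnt_of_not_mem_support q u hxs
      have huy : u ≠ y := fun h' => hxs (h' ▸ q.end_mem_support)
      simp [h0, huy, Sym2.mem_iff]
    · by_cases huz : u = z
      · subst huz
        have hmem : u ∈ s(x, u) := by simp
        simp only [ne_eq, not_true_eq_false, and_false, or_false, and_true, not_false_iff,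
          true_and, false_or, eq_self_iff_true] at ih
        simp only [hmem, decide_true, if_pos]
        rw [Nat.odd_add_one, Nat.not_odd_iff_even, ← Nat.not_odd_iff_even, ih]
        by_cases huy : u = y <;> tauto
      · have hmem : ¬ u ∈ s(x, z) := by simp [hux, huz, Sym2.mem_iff]
        simp only [hmem, decide_false, if_neg, Nat.add_zero, if_false,
          Bool.false_eq_true, reduceIte]
        rw [ih]
        tauto

lemma card_mem_edge {V : Type} [Fintype V] [DecidableEq V] {e : Sym2 V} (he : ¬ e.IsDiag) :
    (Finset.univ.filter fun u => u ∈ e).card = 2 := by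
  induction e using Sym2.ind with
  | _ a b =>
    have hab : a ≠ b := by simpa using he
    have : (Finset.univ.filter fun u => u ∈ s(a,b)) = {a, b} := by
      ext u; simp [Sym2.mem_iff]
    rw [this, Finset.card_insert_of_notMem (by simpa using hab), Finset.card_singleton]

lemma double_count {V : Type} [Fintype V] [DecidableEq V] (d : Finset (Sym2 V))
    (hd : ∀ e ∈ d, ¬ e.IsDiag) :
    ∑ u, (d.filter fun e => u ∈ e).card = 2 * d.card := by
  have : ∀ u : V, (d.filter fun e => u ∈ e).card = ∑ e ∈ d, if u ∈ e then 1 else 0 := by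
    intro u; rw [Finset.card_filter]
  simp_rw [this]
  rw [Finset.sum_comm]
  have : ∀ e ∈ d, (∑ u : V, if u ∈ e then 1 else 0) = 2 := by
    intro e he
    rw [← Finset.card_filter]
    exact card_mem_edge (hd e he)
  rw [Finset.sum_congr rfl this, Finset.sum_const, smul_eq_mul, mul_comm]

lemma odd_partner {V : Type} [Fintype V] [DecidableEq V] (d : Finset (Sym2 V))
    (hd : ∀ e ∈ d, ¬ e.IsDiag) (v : V) (hv : Odd ((d.filter fun e => v ∈ e).card)) :
    ∃ w, w ≠ v ∧ Odd ((d.filter fun e => w ∈ e).card) := by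
  have heven : Even ((Finset.univ.filter fun u : V =>
      Odd ((d.filter fun e => u ∈ e).card)).card) := by
    rw [← Finset.even_sum_iff_even_card_odd]
    exact ⟨d.card, by rw [double_count d hd]; ring⟩
  have hvmem : v ∈ Finset.univ.filter fun u : V => Odd ((d.filter fun e => u ∈ e).card) := by
    simp [hv]
  have h1 : 1 < (Finset.univ.filter fun u : V =>
      Odd ((d.filter fun e => u ∈ e).card)).card := by
    rcases heven with ⟨k, hk⟩
    have : 0 < (Finset.univ.filter fun u : V =>
        Odd ((d.filter fun e => u ∈ e).card)).card := Finset.card_pos.mpr ⟨v, hvmem⟩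
    omega
  obtain ⟨w, hw, hwv⟩ := Finset.exists_mem_ne h1 v
  exact ⟨w, hwv, (Finset.mem_filter.mp hw).2⟩

lemma reach_odd_partner {V : Type} [Fintype V] [DecidableEq V] (G : SimpleGraph V)
    (c : Finset (Sym2 V)) (hc : ∀ e ∈ c, e ∈ G.edgeSet) (v : V)
    (hv : Odd ((c.filter fun e => v ∈ e).card)) :
    ∃ w, w ≠ v ∧ Odd ((c.filter fun e => w ∈ e).card) ∧
      Nonempty ((SimpleGraph.fromEdgeSet (↑c : Set (Sym2 V))).Walk v w) := by
  classical
  set H := SimpleGraph.fromEdgeSet (↑c : Set (Sym2 V)) with hH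
  have hnd : ∀ e ∈ c, ¬ e.IsDiag := fun e he => G.not_isDiag_of_mem_edgeSet (hc e he)
  have hclose : ∀ e ∈ c, ∀ u ∈ e, H.Reachable v u → ∀ x ∈ e, H.Reachable v x := by
    intro e he
    induction e using Sym2.ind with
    | _ a b =>
      intro u hu hru x hx
      have hab : a ≠ b := by simpa using hnd _ he
      have hadj : H.Adj a b := by
        rw [hH, SimpleGraph.fromEdgeSet_adj]
        exact ⟨by simpa using he, hab⟩
      rcases Sym2.mem_iff.mp hu with rfl | rfl <;> rcases Sym2.mem_iff.mp hx with rfl | rfl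
      · exact hru
      · exact hru.trans hadj.reachable
      · exact hru.trans hadj.symm.reachable
      · exact hru
  set d := c.filter (fun e => ∀ x ∈ e, H.Reachable v x) with hdd
  have cnt_eq : ∀ u, H.Reachable v u →
      (d.filter fun e => u ∈ e) = (c.filter fun e => u ∈ e) := by
    intro u hru
    rw [hdd, Finset.filter_filter]
    apply Finset.filter_congr
    intro e he
    constructor
    · rintro ⟨_, h⟩; exact h
    · intro hue
      exact ⟨hclose e he u hue hru, hue⟩
  have cnt_zero : ∀ u, ¬ H.Reachable v u → (d.filter fun e => u ∈ e) = ∅ := by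
    intro u hru
    rw [Finset.filter_eq_empty_iff]
    intro e he hue
    rw [hdd, Finset.mem_filter] at he
    exact hru (he.2 u hue)
  have hv' : Odd ((d.filter fun e => v ∈ e).card) := by
    rw [cnt_eq v (SimpleGraph.Reachable.refl v)]; exact hv
  obtain ⟨w, hwv, hw⟩ := odd_partner d
    (fun e he => hnd e (Finset.mem_filter.mp (hdd ▸ he)).1) v hv'
  have hrw : H.Reachable v w := by
    by_contra hcon
    rw [cnt_zero w hcon] at hw
    simp at hw
  refine ⟨w, hwv, ?_, hrw⟩
  rw [← cnt_eq w hrw]; exact hw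

lemma exists_odd_path {V : Type} [Fintype V] [DecidableEq V] (G : SimpleGraph V)
    (c : Finset (Sym2 V)) (hc : ∀ e ∈ c, e ∈ G.edgeSet) (v : V)
    (hv : Odd ((c.filter fun e => v ∈ e).card)) :
    ∃ w, w ≠ v ∧ Odd ((c.filter fun e => w ∈ e).card) ∧
      ∃ p : G.Walk v w, p.IsPath ∧ ∀ e ∈ p.edges, e ∈ c := by
  obtain ⟨w, hwv, hw, ⟨p0⟩⟩ := reach_odd_partner G c hc v hv
  set H := SimpleGraph.fromEdgeSet (↑c : Set (Sym2 V)) with hH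
  let p1 : H.Walk v w := (p0.toPath : H.Walk v w)
  have hp1 : p1.IsPath := p0.toPath.isPath
  have hedges : ∀ e ∈ p1.edges, e ∈ c := by
    intro e he
    have := p1.edges_subset_edgeSet he
    rw [hH, SimpleGraph.edgeSet_fromEdgeSet] at this
    exact this.1
  have hsub : ∀ e ∈ p1.edges, e ∈ G.edgeSet := fun e he => hc e (hedges e he)
  refine ⟨w, hwv, hw, p1.transfer G hsub, hp1.transfer hsub, ?_⟩
  intro e he
  rw [SimpleGraph.Walk.edges_transfer] at he
  exact hedges e he

lemma main_aux {V : Type} [Fintype V] [DecidableEq V] :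
    ∀ n : ℕ, ∀ (G : SimpleGraph V) (c : Finset (Sym2 V)), c.card ≤ n →
    (∀ e ∈ c, e ∈ G.edgeSet) → ∀ (M : ℕ) (B : Finset V),
    B = Finset.univ.filter (fun v : V => Odd ((c.filter fun e => v ∈ e).card)) →
    B.card = 2 * M →
    ∃ (ends : Fin M → V × V) (γ : ∀ m : Fin M, G.Walk (ends m).1 (ends m).2),
      (∀ m : Fin M, (γ m).IsPath) ∧
      (∀ m : Fin M, ∀ e ∈ (γ m).edges, e ∈ c) ∧
      (∀ m m' : Fin M, m ≠ m' → ∀ e ∈ (γ m).edges, e ∉ (γ m').edges) ∧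
      (∀ m : Fin M, (ends m).1 ∈ B ∧ (ends m).2 ∈ B) ∧
      (∀ v ∈ B, ∃! m : Fin M, v = (ends m).1 ∨ v = (ends m).2) := by
  intro n
  induction n with
  | zero =>
    intro G c hcn hc M B hB hcard
    have hc0 : c = ∅ := Finset.card_eq_zero.mp (Nat.le_zero.mp hcn)
    have hB0 : B = ∅ := by
      rw [hB, hc0]
      simp [Finset.filter_eq_empty_iff]
    have hM : M = 0 := by rw [hB0] at hcard; simpa using hcard.symm
    subst hM
    exact ⟨fun m => m.elim0, fun m => m.elim0, fun m => m.elim0, fun m => m.elim0,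
      fun m => m.elim0, fun m => m.elim0, fun u hu => by rw [hB0] at hu; simp at hu⟩
  | succ n ih =>
    intro G c hcn hc M B hB hcard
    match M, hcard with
    | 0, hcard =>
      have hB0 : B = ∅ := Finset.card_eq_zero.mp (by omega)
      exact ⟨fun m => m.elim0, fun m => m.elim0, fun m => m.elim0, fun m => m.elim0,
        fun m => m.elim0, fun m => m.elim0, fun u hu => by rw [hB0] at hu; simp at hu⟩
    | M' + 1, hcard =>
      have hBne : B.Nonempty := Finset.card_pos.mp (by omega)
      obtain ⟨v, hvB⟩ := hBne
      have hv : Odd ((c.filter fun e => v ∈ e).card) := by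
        rw [hB] at hvB; exact (Finset.mem_filter.mp hvB).2
      obtain ⟨w, hwv, hw, p, hp, hpc⟩ := exists_odd_path G c hc v hv
      have hwB : w ∈ B := by rw [hB]; exact Finset.mem_filter.mpr ⟨Finset.mem_univ _, hw⟩
      set pE := p.edges.toFinset with hpEdef
      have hpEc : pE ⊆ c := fun e he => hpc e (List.mem_toFinset.mp he)
      set c' := c \ pE with hc'def
      have hc'sub : ∀ e ∈ c', e ∈ G.edgeSet := fun e he => hc e (Finset.mem_sdiff.mp he).1
      have hnodup : p.edges.Nodup := hp.isTrail.edges_nodup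
      have hk : ∀ u : V, (pE.filter fun e => u ∈ e).card = p.edges.countP (fun e => u ∈ e) := by
        intro u
        have h1 : pE.filter (fun e => u ∈ e) = (p.edges.filter (fun e => u ∈ e)).toFinset := by
          ext e; simp [hpEdef]
        rw [h1, List.card_toFinset, (hnodup.filter _).dedup, List.countP_eq_length_filter]
      have hsplit : ∀ u : V, ((c.filter fun e => u ∈ e)).card
          = ((c'.filter fun e => u ∈ e)).card + ((pE.filter fun e => u ∈ e)).card := by
        intro u
        rw [hc'def, ← Finset.card_union_of_disjoint
          (Finset.disjoint_filter_filter Finset.sdiff_disjoint),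
          ← Finset.filter_union, Finset.sdiff_union_of_subset hpEc]
      have hB' : (Finset.univ.filter fun u : V => Odd ((c'.filter fun e => u ∈ e).card))
          = B \ {v, w} := by
        ext u
        simp only [Finset.mem_filter, Finset.mem_univ, true_and, Finset.mem_sdiff,
          Finset.mem_insert, Finset.mem_singleton, hB]
        have hsp := hsplit u
        have hpp := path_parity p hp u
        rw [← hk u] at hpp
        by_cases h1 : u = v
        · subst h1
          have hkodd : Odd ((pE.filter fun e => u ∈ e).card) :=
            hpp.mpr (Or.inl ⟨rfl, fun h' => hwv h'.symm⟩)
          rw [Nat.odd_iff] at hkodd ⊢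
          rw [Nat.odd_iff] at hv
          constructor
          · intro h'; omega
          · rintro ⟨_, h2⟩; exact absurd (Or.inl rfl) h2
        · by_cases h2 : u = w
          · subst h2
            have hkodd : Odd ((pE.filter fun e => u ∈ e).card) :=
              hpp.mpr (Or.inr ⟨rfl, h1⟩)
            rw [Nat.odd_iff] at hkodd ⊢
            rw [Nat.odd_iff] at hw
            constructor
            · intro h'; omega
            · rintro ⟨_, h3⟩; exact absurd (Or.inr rfl) h3
          · have hkev : ¬ Odd ((pE.filter fun e => u ∈ e).card) := by
              rw [hpp]; tauto
            rw [Nat.not_odd_iff_even, Nat.even_iff] at hkev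
            rw [Nat.odd_iff, Nat.odd_iff]
            constructor
            · intro h'; exact ⟨by omega, by tauto⟩
            · rintro ⟨h3, _⟩; omega
      have hvwB : ({v, w} : Finset V) ⊆ B := by
        intro x hx
        rcases Finset.mem_insert.mp hx with rfl | hx
        · exact hvB
        · rw [Finset.mem_singleton] at hx; subst hx; exact hwB
      have hcard' : (B \ {v, w}).card = 2 * M' := by
        rw [Finset.card_sdiff_of_subset hvwB, Finset.card_insert_of_notMem (by simpa using hwv.symm),
          Finset.card_singleton, hcard]
        omega
      have hpEne : pE.Nonempty := by
        rw [Finset.nonempty_iff_ne_empty, hpEdef, Ne, List.toFinset_eq_empty_iff]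
        intro hnil
        have hlen : p.length = 0 := by
          have := p.length_edges
          rw [hnil] at this
          simpa using this.symm
        exact hwv (SimpleGraph.Walk.eq_of_length_eq_zero hlen).symm
      have hc'n : c'.card ≤ n := by
        have h1 : c'.card = c.card - pE.card := by rw [hc'def, Finset.card_sdiff_of_subset hpEc]
        have h2 : 0 < pE.card := Finset.card_pos.mpr hpEne
        omega
      obtain ⟨ends', γ', hP', hC', hD', hE', hU'⟩ :=
        ih G c' hc'n hc'sub M' (B \ {v, w}) hB'.symm hcard'
      have hEnotv : ∀ i : Fin M', (ends' i).1 ≠ v ∧ (ends' i).1 ≠ w ∧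
          (ends' i).2 ≠ v ∧ (ends' i).2 ≠ w := by
        intro i
        obtain ⟨h1, h2⟩ := hE' i
        rw [Finset.mem_sdiff] at h1 h2
        constructor
        · intro h; exact h1.2 (by simp [h])
        constructor
        · intro h; exact h1.2 (by simp [h])
        constructor
        · intro h; exact h2.2 (by simp [h])
        · intro h; exact h2.2 (by simp [h])
      have he0a : v = (Fin.cons (α := fun _ => V × V) (v, w) ends' (0 : Fin (M' + 1))).1 := by simp
      have he0b : w = (Fin.cons (α := fun _ => V × V) (v, w) ends' (0 : Fin (M' + 1))).2 := by simp
      have hesa : ∀ i : Fin M', (ends' i).1 = (Fin.cons (α := fun _ => V × V) (v, w) ends' i.succ).1 := by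
        intro i; simp
      have hesb : ∀ i : Fin M', (ends' i).2 = (Fin.cons (α := fun _ => V × V) (v, w) ends' i.succ).2 := by
        intro i; simp
      refine ⟨Fin.cons (α := fun _ => V × V) (v, w) ends',
        fun m => Fin.cases (motive := fun m =>
          G.Walk (Fin.cons (α := fun _ => V × V) (v, w) ends' m).1 (Fin.cons (α := fun _ => V × V) (v, w) ends' m).2)
          (p.copy he0a he0b) (fun i => (γ' i).copy (hesa i) (hesb i)) m,
        ?_, ?_, ?_, ?_, ?_⟩
      · intro m
        induction m using Fin.cases with
        | zero => simpa using hp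
        | succ i => simpa using hP' i
      · intro m
        induction m using Fin.cases with
        | zero => simpa using hpc
        | succ i =>
          simp only [Fin.cases_succ, SimpleGraph.Walk.edges_copy]
          intro e he
          exact (Finset.mem_sdiff.mp (hC' i e he)).1
      · intro m m' hmm
        induction m using Fin.cases with
        | zero =>
          induction m' using Fin.cases with
          | zero => exact absurd rfl hmm
          | succ j =>
            simp only [Fin.cases_zero, Fin.cases_succ, SimpleGraph.Walk.edges_copy]
            intro e he hecon
            have h1 : e ∈ pE := List.mem_toFinset.mpr he
            have h2 : e ∈ c' := hC' j e hecon
            exact (Finset.mem_sdiff.mp h2).2 h1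
        | succ i =>
          induction m' using Fin.cases with
          | zero =>
            simp only [Fin.cases_zero, Fin.cases_succ, SimpleGraph.Walk.edges_copy]
            intro e he hecon
            have h1 : e ∈ pE := List.mem_toFinset.mpr hecon
            have h2 : e ∈ c' := hC' i e he
            exact (Finset.mem_sdiff.mp h2).2 h1
          | succ j =>
            simp only [Fin.cases_succ, SimpleGraph.Walk.edges_copy]
            exact hD' i j (fun h => hmm (by rw [h]))
      · intro m
        induction m using Fin.cases with
        | zero => simpa using ⟨hvB, hwB⟩
        | succ i =>
          simp only [Fin.cons_succ]
          obtain ⟨h1, h2⟩ := hE' i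
          exact ⟨(Finset.mem_sdiff.mp h1).1, (Finset.mem_sdiff.mp h2).1⟩
      · intro u huB
        by_cases huv : u = v
        · refine ⟨0, by simp [huv], ?_⟩
          intro m hm
          induction m using Fin.cases with
          | zero => rfl
          | succ i =>
            exfalso
            simp only [Fin.cons_succ] at hm
            obtain ⟨e1, e2, _, _⟩ := hEnotv i
            rcases hm with hm | hm
            · exact e1 (hm ▸ huv ▸ rfl)
            · exact (hEnotv i).2.2.1 (hm ▸ huv ▸ rfl)
        · by_cases huw : u = w
          · refine ⟨0, by simp [huw], ?_⟩
            intro m hm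
            induction m using Fin.cases with
            | zero => rfl
            | succ i =>
              exfalso
              simp only [Fin.cons_succ] at hm
              rcases hm with hm | hm
              · exact (hEnotv i).2.1 (hm ▸ huw ▸ rfl)
              · exact (hEnotv i).2.2.2 (hm ▸ huw ▸ rfl)
          · have huB' : u ∈ B \ {v, w} := by
              rw [Finset.mem_sdiff]
              exact ⟨huB, by simp [huv, huw]⟩
            obtain ⟨i, hi, hiu⟩ := hU' u huB'
            refine ⟨i.succ, by simpa using hi, ?_⟩
            intro m hm
            induction m using Fin.cases with
            | zero =>
              exfalso
              simp only [Fin.cons_zero] at hm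
              rcases hm with hm | hm
              · exact huv hm
              · exact huw hm
            | succ j =>
              simp only [Fin.cons_succ] at hm
              rw [hiu j hm]

/-- **Edge-disjoint path decomposition of an even-boundary edge set.**
Let `c` be a finite set of edges of a finite simple graph `G`, and let `B` be
the set of vertices incident to an odd number of edges of `c`; suppose
`|B| = 2M`. Then there are `M` pairwise edge-disjoint paths in `G`, all of whose
edges lie in `c`, all of whose endpoints lie in `B`, such that every vertex of
`B` is an endpoint of exactly one of the paths. -/
theorem stmt14 {V : Type} [Fintype V] [DecidableEq V] (G : SimpleGraph V)
    (c : Finset (Sym2 V)) (hc : ∀ e ∈ c, e ∈ G.edgeSet) (M : ℕ)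
    (B : Finset V)
    (hB : B = Finset.univ.filter fun v : V => Odd ((c.filter fun e => v ∈ e).card))
    (hcard : B.card = 2 * M) :
    ∃ (ends : Fin M → V × V) (γ : ∀ m : Fin M, G.Walk (ends m).1 (ends m).2),
      (∀ m : Fin M, (γ m).IsPath) ∧
      (∀ m : Fin M, ∀ e ∈ (γ m).edges, e ∈ c) ∧
      (∀ m m' : Fin M, m ≠ m' → ∀ e ∈ (γ m).edges, e ∉ (γ m').edges) ∧
      (∀ m : Fin M, (ends m).1 ∈ B ∧ (ends m).2 ∈ B) ∧
      (∀ v ∈ B, ∃! m : Fin M, v = (ends m).1 ∨ v = (ends m).2) := by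
  exact main_aux c.card G c le_rfl hc M B hB hcard
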